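/- Let a, b, c ∈ ℝ and let x, λ, μ : I → ℝ be differentiable on an interval I, satisfying x' = −a x + (b + c x) u, λ' = a λ − 1 + u, and μ' = (c μ − b λ) u for a function u : I → ℝ. Then the switching function σ := b λ − c μ − x is differentiable and satisfies σ'(t) = c·u(t)·σ(t) + a b λ(t) + a x(t) − b for all t ∈ I. In particular, on any arc where u ≡ 1 one has σ' = c σ + a b λ + a x − b, and on any arc where σ ≡ 0 one has a b λ + a x − b = 0. -/

import Mathlib

/-- Along the characteristic system `x' = -a x + (b + c x) u`,
`λ' = a λ - 1 + u`, `μ' = (c μ - b λ) u`, the switching function `σ = b λ - c μ - x`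
is differentiable and satisfies `σ' = c u σ + a b λ + a x - b`.
In particular, on an arc where `u ≡ 1` one has `σ' = c σ + a b λ + a x - b`, and
on an arc where `σ ≡ 0` one has `a b λ + a x - b = 0`. -/
theorem switching_function_dynamics (a b c : ℝ) (I : Set ℝ)
    (hI_open : IsOpen I) (hI_conn : I.OrdConnected)
    (x lam mu u : ℝ → ℝ)
    (hx : ∀ t ∈ I, HasDerivAt x (-a * x t + (b + c * x t) * u t) t)
    (hlam : ∀ t ∈ I, HasDerivAt lam (a * lam t - 1 + u t) t)
    (hmu : ∀ t ∈ I, HasDerivAt mu ((c * mu t - b * lam t) * u t) t) :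
    (∀ t ∈ I, HasDerivAt (fun s => b * lam s - c * mu s - x s)
      (c * u t * (b * lam t - c * mu t - x t) + a * b * lam t + a * x t - b) t) ∧
    ((∀ t ∈ I, u t = 1) → ∀ t ∈ I, HasDerivAt (fun s => b * lam s - c * mu s - x s)
      (c * (b * lam t - c * mu t - x t) + a * b * lam t + a * x t - b) t) ∧
    ((∀ t ∈ I, b * lam t - c * mu t - x t = 0) →
      ∀ t ∈ I, a * b * lam t + a * x t - b = 0) := by
  have main : ∀ t ∈ I, HasDerivAt (fun s => b * lam s - c * mu s - x s)
      (c * u t * (b * lam t - c * mu t - x t) + a * b * lam t + a * x t - b) t := by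
    intro t ht
    have h := (((hlam t ht).const_mul b).sub ((hmu t ht).const_mul c)).sub (hx t ht)
    refine h.congr_deriv ?_
    ring
  refine ⟨main, ?_, ?_⟩
  · intro hu t ht
    have h := main t ht
    rw [hu t ht] at h
    simpa using h
  · intro hσ t ht
    have h := main t ht
    rw [hσ t ht, mul_zero, zero_add] at h
    have h0 : HasDerivAt (fun s => b * lam s - c * mu s - x s) 0 t := by
      have heq : (fun s => b * lam s - c * mu s - x s) =ᶠ[nhds t] fun _ => (0 : ℝ) :=
        Filter.eventuallyEq_iff_exists_mem.2 ⟨I, hI_open.mem_nhds ht, fun s hs => hσ s hs⟩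
      exact (hasDerivAt_const t (0 : ℝ)).congr_of_eventuallyEq heq
    exact h.unique h0
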